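/- Under the i.i.d. sampling assumption and the feasibility assumption μ_τ({1,…,k}) > 1−α, the probability that Algorithm 1 selects an under-covering parameter set tends to zero: lim_{n→∞} P( J^{(n)} ∈ 𝒜^c ) = 0, where 𝒜^c = {J ⊆ {1,…,k} : μ_τ(J) < 1−α}. -/

import Mathlib

open MeasureTheory ProbabilityTheory Filter
open scoped Classical

/-- A binary mask on a `W × H` grid: `true` encodes the value 1. -/
abbrev Mask (W H : ℕ) := Fin W × Fin H → Bool

/-- Intersection-over-Union of two binary masks, with the convention
`IoU A B = 1` when the union is empty. -/
noncomputable def IoU {W H : ℕ} (A B : Mask W H) : ℝ :=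
  if (Finset.univ.filter (fun p : Fin W × Fin H => A p = true ∨ B p = true)).card = 0 then 1
  else ((Finset.univ.filter (fun p : Fin W × Fin H => A p = true ∧ B p = true)).card : ℝ) /
    ((Finset.univ.filter (fun p : Fin W × Fin H => A p = true ∨ B p = true)).card : ℝ)

variable {𝒳 : Type*} [MeasurableSpace 𝒳] {W H k : ℕ}

/-- `μ_τ(J)`: the probability under the law `P` that some parameter index `j ∈ J`
produces a mask with `IoU` exceeding `τ` against the true mask. -/
noncomputable def muTau (P : Measure (𝒳 × Mask W H)) (f : 𝒳 → Fin k → Mask W H)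
    (τ : ℝ) (J : Finset (Fin k)) : ENNReal :=
  P {p | ∃ j ∈ J, τ < IoU p.2 (f p.1 j)}

/-- `Covers Z f α τ n ω J` says that the parameter set `J` covers at least a
`(1−α)` fraction of the first `n` calibration samples `Z 1 ω, …, Z n ω`:
`|⋃_{j ∈ J} S_j^{(n)}| ≥ (1−α)·n`. -/
def Covers (Z : ℕ → Ω → 𝒳 × Mask W H) (f : 𝒳 → Fin k → Mask W H) (α τ : ℝ)
    (n : ℕ) (ω : Ω) (J : Finset (Fin k)) : Prop :=
  (1 - α) * n ≤ (((Finset.Icc 1 n).filter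
    (fun i => ∃ j ∈ J, τ < IoU (Z i ω).2 (f (Z i ω).1 j))).card : ℝ)


private lemma measSet_muTau {𝒳 : Type*} [MeasurableSpace 𝒳] {W H k : ℕ}
    (f : 𝒳 → Fin k → Mask W H) (hf : ∀ j, Measurable (fun x => f x j))
    (τ : ℝ) (J : Finset (Fin k)) :
    MeasurableSet {p : 𝒳 × Mask W H | ∃ j ∈ J, τ < IoU p.2 (f p.1 j)} := by
  have h : {p : 𝒳 × Mask W H | ∃ j ∈ J, τ < IoU p.2 (f p.1 j)} =
      ⋃ j ∈ J, (fun p : 𝒳 × Mask W H => (p.2, f p.1 j)) ⁻¹'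
        {q : Mask W H × Mask W H | τ < IoU q.1 q.2} := by
    ext p; simp
  rw [h]
  refine MeasurableSet.biUnion J.countable_toSet fun j _ => ?_
  exact (measurable_snd.prodMk ((hf j).comp measurable_fst))
    (Set.toFinite _).measurableSet

private lemma covers_prob_tendsto_zero {𝒳 : Type*} [MeasurableSpace 𝒳] {W H k : ℕ}
    {Ω : Type*} [MeasurableSpace Ω] (Pr : Measure Ω) [IsProbabilityMeasure Pr]
    (P : Measure (𝒳 × Mask W H)) [IsProbabilityMeasure P]
    (f : 𝒳 → Fin k → Mask W H) (hf : ∀ j, Measurable (fun x => f x j))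
    (α τ : ℝ) (hα1 : α < 1)
    (Z : ℕ → Ω → 𝒳 × Mask W H) (hZmeas : ∀ i, Measurable (Z i))
    (hindep : iIndepFun Z Pr)
    (hlaw : ∀ i, Measure.map (Z i) Pr = P)
    (J : Finset (Fin k)) (hJ : muTau P f τ J < ENNReal.ofReal (1 - α)) :
    Tendsto (fun n : ℕ => Pr {ω | Covers Z f α τ n ω J}) atTop (nhds 0) := by
  set S : Set (𝒳 × Mask W H) := {p | ∃ j ∈ J, τ < IoU p.2 (f p.1 j)} with hSdef
  have hS : MeasurableSet S := measSet_muTau f hf τ J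
  set g : 𝒳 × Mask W H → ℝ := S.indicator (fun _ => 1) with hgdef
  have hg : Measurable g := measurable_const.indicator hS
  set X : ℕ → Ω → ℝ := fun i ω => g (Z (i + 1) ω) with hXdef
  -- integrability
  have hgint : Integrable g P := (integrable_const (1 : ℝ)).indicator hS
  have hXint : Integrable (X 0) Pr := by
    have := (integrable_map_measure hg.aestronglyMeasurable
      (hZmeas 1).aemeasurable).mp (by rwa [hlaw 1])
    exact this
  -- pairwise independence
  have hXindep : Pairwise (Function.onFun (IndepFun · · Pr) X) := by
    intro i j hij
    exact (hindep.indepFun (by omega : i + 1 ≠ j + 1)).comp hg hg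
  -- identical distribution
  have hXident : ∀ i, IdentDistrib (X i) (X 0) Pr Pr := by
    intro i
    refine ⟨(hg.comp (hZmeas _)).aemeasurable, (hg.comp (hZmeas _)).aemeasurable, ?_⟩
    show Measure.map (g ∘ Z (i + 1)) Pr = Measure.map (g ∘ Z 1) Pr
    rw [← Measure.map_map hg (hZmeas _), ← Measure.map_map hg (hZmeas _),
      hlaw, hlaw]
  -- the mean
  have hmean : (∫ ω, X 0 ω ∂Pr) = (P S).toReal := by
    have h1 : (∫ ω, X 0 ω ∂Pr) = ∫ p, g p ∂P := by
      rw [← hlaw 1]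
      exact (integral_map (hZmeas 1).aemeasurable hg.aestronglyMeasurable).symm
    rw [h1, hgdef, integral_indicator_const (1 : ℝ) hS, smul_eq_mul, mul_one, Measure.real]
  have hplt : (P S).toReal < 1 - α := by
    have hne : P S ≠ ⊤ := measure_ne_top _ _
    have : (P S).toReal < (ENNReal.ofReal (1 - α)).toReal :=
      ENNReal.toReal_lt_toReal hne ENNReal.ofReal_ne_top |>.mpr hJ
    rwa [ENNReal.toReal_ofReal (by linarith)] at this
  -- count identity
  have hcount : ∀ n ω, (((Finset.Icc 1 n).filter
      (fun i => ∃ j ∈ J, τ < IoU (Z i ω).2 (f (Z i ω).1 j))).card : ℝ)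
      = ∑ i ∈ Finset.range n, X i ω := by
    intro n ω
    rw [Finset.card_filter]
    push_cast
    rw [show Finset.Icc 1 n = Finset.Ico 1 (n + 1) by rw [Finset.Ico_add_one_right_eq_Icc],
      Finset.sum_Ico_eq_sum_range]
    simp only [Nat.add_sub_cancel]
    refine Finset.sum_congr rfl fun i _ => ?_
    simp [hXdef, hgdef, Set.indicator_apply, hSdef, add_comm 1 i]
  -- strong law
  have hae := strong_law_ae_real X hXint hXindep hXident
  -- a.e. eventually not Covers
  have hev : ∀ᵐ ω ∂Pr, ∀ᶠ n : ℕ in atTop, ¬ Covers Z f α τ n ω J := by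
    filter_upwards [hae] with ω hω
    rw [hmean] at hω
    have h1 : ∀ᶠ n : ℕ in atTop,
        (∑ i ∈ Finset.range n, X i ω) / n < 1 - α :=
      hω.eventually_lt_const hplt
    filter_upwards [h1, eventually_ge_atTop 1] with n hn hn1
    intro hcov
    have hnpos : (0 : ℝ) < n := by exact_mod_cast hn1
    rw [Covers, hcount n ω] at hcov
    rw [div_lt_iff₀ hnpos] at hn
    linarith
  -- measurability of the Covers events
  have hA : ∀ n : ℕ, MeasurableSet {ω | Covers Z f α τ n ω J} := by
    intro n
    have hcardmeas : Measurable (fun ω => (((Finset.Icc 1 n).filter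
        (fun i => ∃ j ∈ J, τ < IoU (Z i ω).2 (f (Z i ω).1 j))).card : ℝ)) := by
      have heq : (fun ω => (((Finset.Icc 1 n).filter
          (fun i => ∃ j ∈ J, τ < IoU (Z i ω).2 (f (Z i ω).1 j))).card : ℝ))
          = fun ω => ∑ i ∈ Finset.Icc 1 n, if Z i ω ∈ S then (1 : ℝ) else 0 := by
        funext ω
        rw [Finset.card_filter]
        push_cast
        exact Finset.sum_congr rfl fun i _ => by simp [hSdef]
      rw [heq]
      refine Finset.measurable_sum _ fun i _ => ?_
      exact Measurable.ite ((hZmeas i) hS) measurable_const measurable_const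
    exact measurableSet_le measurable_const hcardmeas
  -- dominated convergence
  have hFmeas : ∀ n : ℕ, Measurable
      (fun ω => ({ω | Covers Z f α τ n ω J} : Set Ω).indicator
        (fun _ => (1 : ENNReal)) ω) :=
    fun n => measurable_const.indicator (hA n)
  have hbound : ∀ n : ℕ,
      (fun ω => ({ω | Covers Z f α τ n ω J} : Set Ω).indicator
        (fun _ => (1 : ENNReal)) ω) ≤ᵐ[Pr] fun _ => (1 : ENNReal) := by
    intro n
    refine Filter.Eventually.of_forall fun ω => ?_
    classical
    by_cases h : ω ∈ ({ω | Covers Z f α τ n ω J} : Set Ω) <;>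
      simp [Set.indicator_apply, h]
  have hlim : ∀ᵐ ω ∂Pr, Tendsto
      (fun n => ({ω | Covers Z f α τ n ω J} : Set Ω).indicator
        (fun _ => (1 : ENNReal)) ω) atTop (nhds 0) := by
    filter_upwards [hev] with ω hω
    refine Tendsto.congr' ?_ tendsto_const_nhds
    filter_upwards [hω] with n hn
    simp [Set.indicator_apply, hn]
  have hdct := tendsto_lintegral_of_dominated_convergence
    (μ := Pr) (F := fun n ω => ({ω | Covers Z f α τ n ω J} : Set Ω).indicator
      (fun _ => (1 : ENNReal)) ω) (f := fun _ => 0) (fun _ => (1 : ENNReal))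
    hFmeas hbound (by simp) hlim
  simp only [lintegral_zero] at hdct
  refine hdct.congr fun n => ?_
  rw [lintegral_indicator (hA n)]
  simp

/-- Under i.i.d. sampling and the feasibility assumption
`μ_τ({1,…,k}) > 1−α`, the probability that Algorithm 1 selects an under-covering
parameter set (`μ_τ(J^{(n)}) < 1−α`) tends to zero. -/
theorem algorithm1_undercover_prob_tendsto_zero
    (hk : 1 ≤ k) {Ω : Type*} [MeasurableSpace Ω]
    (Pr : Measure Ω) [IsProbabilityMeasure Pr]
    (P : Measure (𝒳 × Mask W H)) [IsProbabilityMeasure P]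
    (f : 𝒳 → Fin k → Mask W H) (hf : ∀ j, Measurable (fun x => f x j))
    (α τ : ℝ) (hα : α ∈ Set.Ioo (0:ℝ) 1) (hτ : τ ∈ Set.Ioo (0:ℝ) 1)
    (Z : ℕ → Ω → 𝒳 × Mask W H) (hZmeas : ∀ i, Measurable (Z i))
    (hindep : iIndepFun Z Pr)
    (hlaw : ∀ i, Measure.map (Z i) Pr = P)
    (hfeas : ENNReal.ofReal (1 - α) < muTau P f τ (Finset.univ : Finset (Fin k)))
    (lt : Finset (Fin k) → Finset (Fin k) → Prop)
    (hlto : IsStrictTotalOrder (Finset (Fin k)) lt)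
    (hltcard : ∀ J J' : Finset (Fin k), J.card < J'.card → lt J J')
    (Jn : ℕ → Ω → Option (Finset (Fin k)))
    (hJn : ∀ (n : ℕ) (ω : Ω) (J : Finset (Fin k)), Jn n ω = some J ↔
      (Covers Z f α τ n ω J ∧
        ∀ J' : Finset (Fin k), Covers Z f α τ n ω J' → J = J' ∨ lt J J')) :
    Tendsto (fun n : ℕ =>
        Pr {ω | ∃ J, Jn n ω = some J ∧ muTau P f τ J < ENNReal.ofReal (1 - α)})
      atTop (nhds 0) := by
  classical
  set Bad : Finset (Finset (Fin k)) :=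
    Finset.univ.filter (fun J => muTau P f τ J < ENNReal.ofReal (1 - α)) with hBad
  have hle : ∀ n : ℕ,
      Pr {ω | ∃ J, Jn n ω = some J ∧ muTau P f τ J < ENNReal.ofReal (1 - α)}
        ≤ ∑ J ∈ Bad, Pr {ω | Covers Z f α τ n ω J} := by
    intro n
    refine le_trans (measure_mono ?_) (measure_biUnion_finset_le Bad _)
    rintro ω ⟨J, hJsome, hbad⟩
    exact Set.mem_biUnion (Finset.mem_coe.mpr
      (Finset.mem_filter.mpr ⟨Finset.mem_univ J, hbad⟩)) ((hJn n ω J).mp hJsome).1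
  have hsum : Tendsto
      (fun n : ℕ => ∑ J ∈ Bad, Pr {ω | Covers Z f α τ n ω J}) atTop (nhds 0) := by
    have := tendsto_finset_sum Bad (fun J hJmem =>
      covers_prob_tendsto_zero Pr P f hf α τ hα.2 Z hZmeas hindep hlaw J
        (Finset.mem_filter.mp hJmem).2)
    simpa using this
  exact tendsto_of_tendsto_of_tendsto_of_le_of_le tendsto_const_nhds hsum
    (fun n => zero_le) hle
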